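/- Theorem 2.3 (Choquet decomposition of the lower natural extension): Suppose Σ_{ω ∈ Ω} p̄(ω) ≥ 1. Let f be a gamble decomposed in terms of its level sets as f = Σ_{i=0}^{n} λ_i I_{A_i}, where λ_0 ∈ ℝ, λ_1, …, λ_n > 0, and Ω = A_0 ⊋ A_1 ⊋ ⋯ ⊋ A_n ≠ ∅. Then E_{p̄}(f) = Σ_{i=0}^{n} λ_i E_{p̄}(A_i). -/

import Mathlib

/-- The upper natural extension of a gamble `f` with respect to the upper
probability mass function `pbar`. -/
noncomputable def upperExt {Ω : Type*} [Fintype Ω] [DecidableEq Ω]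
    (pbar f : Ω → ℝ) : ℝ :=
  sInf {β : ℝ | ∃ lam : Ω → ℝ, (∀ ω, 0 ≤ lam ω) ∧
    ∀ ω' : Ω, ∑ ω : Ω, lam ω * (pbar ω - (if ω' = ω then (1 : ℝ) else 0)) ≤ β - f ω'}

/-- The lower natural extension, conjugate of the upper natural extension. -/
noncomputable def lowerExt {Ω : Type*} [Fintype Ω] [DecidableEq Ω]
    (pbar f : Ω → ℝ) : ℝ :=
  -(upperExt pbar (fun ω => -(f ω)))

set_option linter.unnecessarySeqFocus false

section helpers

variable {Ω : Type*} [Fintype Ω] [DecidableEq Ω]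

lemma sum_delta (lam : Ω → ℝ) (ω' : Ω) :
    ∑ ω : Ω, lam ω * (if ω' = ω then (1:ℝ) else 0) = lam ω' := by
  simp [mul_ite]

lemma set_lb (pbar p g : Ω → ℝ) (hp0 : ∀ ω, 0 ≤ p ω) (hpb : ∀ ω, p ω ≤ pbar ω)
    (hp1 : ∑ ω : Ω, p ω = 1) :
    ∀ β ∈ {β : ℝ | ∃ lam : Ω → ℝ, (∀ ω, 0 ≤ lam ω) ∧
      ∀ ω' : Ω, ∑ ω : Ω, lam ω * (pbar ω - (if ω' = ω then (1 : ℝ) else 0)) ≤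
        β - (fun ω => -(g ω)) ω'},
    (-∑ ω : Ω, p ω * g ω) ≤ β := by
  rintro β ⟨lam, hlam0, h⟩
  have h' : ∀ ω', (∑ ω : Ω, lam ω * pbar ω) - lam ω' ≤ β + g ω' := by
    intro ω'
    have := h ω'
    simp only [mul_sub, Finset.sum_sub_distrib, sum_delta] at this
    linarith
  have key : ∀ ω' : Ω, p ω' * ((∑ ω : Ω, lam ω * pbar ω) - lam ω') ≤ p ω' * (β + g ω') :=
    fun ω' => mul_le_mul_of_nonneg_left (h' ω') (hp0 ω')
  have hsum := Finset.sum_le_sum (fun ω' (_ : ω' ∈ Finset.univ) => key ω')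
  have e1 : ∑ ω' : Ω, p ω' * ((∑ ω : Ω, lam ω * pbar ω) - lam ω')
      = (∑ ω : Ω, lam ω * pbar ω) - ∑ ω' : Ω, p ω' * lam ω' := by
    simp only [mul_sub, Finset.sum_sub_distrib, ← Finset.sum_mul, hp1, one_mul]
  have e2 : ∑ ω' : Ω, p ω' * (β + g ω') = β + ∑ ω' : Ω, p ω' * g ω' := by
    simp only [mul_add, Finset.sum_add_distrib, ← Finset.sum_mul, hp1, one_mul]
  have e3 : ∑ ω' : Ω, p ω' * lam ω' ≤ ∑ ω : Ω, lam ω * pbar ω := by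
    refine Finset.sum_le_sum (fun ω _ => ?_)
    rw [mul_comm]
    exact mul_le_mul_of_nonneg_left (hpb ω) (hlam0 ω)
  rw [e1, e2] at hsum
  linarith

lemma lowerExt_le_sum [Nonempty Ω] (pbar p g : Ω → ℝ)
    (hp0 : ∀ ω, 0 ≤ p ω) (hpb : ∀ ω, p ω ≤ pbar ω) (hp1 : ∑ ω : Ω, p ω = 1) :
    lowerExt pbar g ≤ ∑ ω : Ω, p ω * g ω := by
  unfold lowerExt upperExt
  have hne : {β : ℝ | ∃ lam : Ω → ℝ, (∀ ω, 0 ≤ lam ω) ∧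
      ∀ ω' : Ω, ∑ ω : Ω, lam ω * (pbar ω - (if ω' = ω then (1 : ℝ) else 0)) ≤
        β - (fun ω => -(g ω)) ω'}.Nonempty := by
    refine ⟨Finset.univ.sup' Finset.univ_nonempty (fun ω => -(g ω)), fun _ => 0, fun _ => le_rfl, ?_⟩
    intro ω'
    simp only [zero_mul, Finset.sum_const_zero]
    have := Finset.le_sup' (fun ω => -(g ω)) (Finset.mem_univ ω')
    show (0:ℝ) ≤ _ - -(g ω')
    linarith
  have := le_csInf hne (set_lb pbar p g hp0 hpb hp1)
  linarith

lemma le_lowerExt [Nonempty Ω] (pbar p g : Ω → ℝ)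
    (hp0 : ∀ ω, 0 ≤ p ω) (hpb : ∀ ω, p ω ≤ pbar ω) (hp1 : ∑ ω : Ω, p ω = 1)
    (α : ℝ) (lam : Ω → ℝ) (hlam0 : ∀ ω, 0 ≤ lam ω)
    (hfeas : ∀ ω', α + (∑ ω : Ω, lam ω * pbar ω) - lam ω' ≤ g ω') :
    α ≤ lowerExt pbar g := by
  unfold lowerExt upperExt
  have hmem : -α ∈ {β : ℝ | ∃ lam : Ω → ℝ, (∀ ω, 0 ≤ lam ω) ∧
      ∀ ω' : Ω, ∑ ω : Ω, lam ω * (pbar ω - (if ω' = ω then (1 : ℝ) else 0)) ≤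
        β - (fun ω => -(g ω)) ω'} := by
    refine ⟨lam, hlam0, fun ω' => ?_⟩
    simp only [mul_sub, Finset.sum_sub_distrib, sum_delta]
    have := hfeas ω'
    show _ ≤ -α - -(g ω')
    linarith
  have hbdd : BddBelow {β : ℝ | ∃ lam : Ω → ℝ, (∀ ω, 0 ≤ lam ω) ∧
      ∀ ω' : Ω, ∑ ω : Ω, lam ω * (pbar ω - (if ω' = ω then (1 : ℝ) else 0)) ≤
        β - (fun ω => -(g ω)) ω'} :=
    ⟨-∑ ω : Ω, p ω * g ω, set_lb pbar p g hp0 hpb hp1⟩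
  have := csInf_le hbdd hmem
  linarith

lemma waterfill {Ω : Type*} [DecidableEq Ω] (c : Ω → ℝ) (hc : ∀ ω, 0 ≤ c ω) :
    ∀ (S : Finset Ω) (t : ℝ), 0 ≤ t → t ≤ ∑ ω ∈ S, c ω →
      ∃ q : Ω → ℝ, (∀ ω, 0 ≤ q ω ∧ q ω ≤ c ω) ∧ (∀ ω ∉ S, q ω = 0) ∧ ∑ ω ∈ S, q ω = t := by
  intro S
  induction S using Finset.induction_on with
  | empty =>
    intro t ht0 ht1
    refine ⟨fun _ => 0, fun ω => ⟨le_rfl, hc ω⟩, fun _ _ => rfl, ?_⟩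
    simp only [Finset.sum_empty] at ht1 ⊢
    linarith
  | @insert a S ha ih =>
    intro t ht0 htle
    have hr0 : (0:ℝ) ≤ min t (c a) := le_min ht0 (hc a)
    have hrc : min t (c a) ≤ c a := min_le_right _ _
    have hrt : min t (c a) ≤ t := min_le_left _ _
    rw [Finset.sum_insert ha] at htle
    have h2 : t - min t (c a) ≤ ∑ ω ∈ S, c ω := by
      rcases le_total t (c a) with h | h
      · rw [min_eq_left h]
        simpa using Finset.sum_nonneg (fun ω _ => hc ω)
      · rw [min_eq_right h]; linarith
    obtain ⟨q, hq, hq0, hqs⟩ := ih (t - min t (c a)) (by linarith) h2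
    refine ⟨fun ω => if ω = a then min t (c a) else q ω, ?_, ?_, ?_⟩
    · intro ω
      by_cases h : ω = a
      · subst h; simp [hr0, hrc]
      · simp only [if_neg h]; exact hq ω
    · intro ω hω
      have h1 : ω ≠ a := fun h => hω (h ▸ Finset.mem_insert_self a S)
      have h2' : ω ∉ S := fun h => hω (Finset.mem_insert_of_mem h)
      simp [h1, hq0 ω h2']
    · rw [Finset.sum_insert ha, if_pos rfl]
      have hcongr : ∑ ω ∈ S, (if ω = a then min t (c a) else q ω) = ∑ ω ∈ S, q ω :=
        Finset.sum_congr rfl (fun ω hω => if_neg (by rintro rfl; exact ha hω))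
      rw [hcongr, hqs]; ring

end helpers

/-- Theorem 2.3: Choquet decomposition of the lower natural extension in terms
of the level sets of `f`. -/
theorem lowerExt_levelSet_decomposition
    {Ω : Type*} [Fintype Ω] [Nonempty Ω] [DecidableEq Ω]
    (pbar : Ω → ℝ) (hpbar : ∀ ω, 0 ≤ pbar ω ∧ pbar ω ≤ 1)
    (hasl : 1 ≤ ∑ ω : Ω, pbar ω)
    (n : ℕ) (lam : ℕ → ℝ) (A : ℕ → Finset Ω)
    (hA0 : A 0 = Finset.univ)
    (hchain : ∀ i < n, A (i + 1) ⊂ A i)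
    (hAn : (A n).Nonempty)
    (hlam : ∀ i, 1 ≤ i → i ≤ n → 0 < lam i)
    (f : Ω → ℝ)
    (hf : ∀ ω, f ω = ∑ i ∈ Finset.range (n + 1),
      lam i * (if ω ∈ A i then (1 : ℝ) else 0)) :
    lowerExt pbar f = ∑ i ∈ Finset.range (n + 1),
      lam i * lowerExt pbar (fun ω => if ω ∈ A i then (1 : ℝ) else 0) := by
  classical
  have hpb0 : ∀ ω, 0 ≤ pbar ω := fun ω => (hpbar ω).1
  set sC : ℕ → ℝ := fun j => ∑ ω ∈ (A j)ᶜ, pbar ω with hsC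
  set t : ℕ → ℝ := fun j => max 0 (1 - sC j) with ht
  -- A is antitone on [0, n]
  have hsub : ∀ i j, i ≤ j → j ≤ n → A j ⊆ A i := by
    intro i j hij
    induction j, hij using Nat.le_induction with
    | base => intro _; exact subset_rfl
    | succ j hj ih =>
      intro hjn
      exact (subset_of_ssubset (hchain j (by omega))).trans (ih (by omega))
  -- per-index dual witnesses
  set μ : ℕ → Ω → ℝ := fun i ω => if sC i ≤ 1 ∧ ω ∉ A i then 1 else 0 with hμ
  have hμ0 : ∀ i ω, 0 ≤ μ i ω := fun i ω => by
    simp only [hμ]; split <;> norm_num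
  have hμsum : ∀ i, sC i ≤ 1 → (∑ ω : Ω, μ i ω * pbar ω) = sC i := by
    intro i hi
    have e : ∀ ω : Ω, μ i ω * pbar ω = if ω ∈ (A i)ᶜ then pbar ω else 0 := by
      intro ω
      simp only [hμ]
      by_cases h : ω ∈ A i <;> simp [h, hi]
    rw [Finset.sum_congr rfl (fun ω _ => e ω), Finset.sum_ite_mem, Finset.univ_inter]
  have key : ∀ i (ω' : Ω),
      t i + (∑ ω : Ω, μ i ω * pbar ω) - μ i ω' ≤ (if ω' ∈ A i then (1:ℝ) else 0) := by
    intro i ω'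
    by_cases hi : sC i ≤ 1
    · rw [hμsum i hi]
      have hti : t i = 1 - sC i := by
        simp only [ht]; exact max_eq_right (by linarith)
      by_cases h : ω' ∈ A i
      · have : μ i ω' = 0 := by simp [hμ, h]
        rw [this, hti]; simp [h]
      · have : μ i ω' = 1 := by simp [hμ, h, hi]
        rw [this, hti]; simp [h]
    · push_neg at hi
      have hti : t i = 0 := by
        simp only [ht]; exact max_eq_left (by linarith)
      have hμz : ∀ ω, μ i ω = 0 := fun ω => by
        simp only [hμ]; rw [if_neg]; rintro ⟨h1, -⟩; linarith
      simp only [hμz, hti, zero_mul, Finset.sum_const_zero, add_zero, sub_zero]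
      split <;> norm_num
  have key0 : ∀ ω' : Ω,
      t 0 + (∑ ω : Ω, μ 0 ω * pbar ω) - μ 0 ω' = (if ω' ∈ A 0 then (1:ℝ) else 0) := by
    intro ω'
    have hμ0z : ∀ ω : Ω, μ 0 ω = 0 := fun ω => by simp [hμ, hA0]
    have hsC0 : sC 0 = 0 := by simp [hsC, hA0]
    simp [hμ0z, hA0, ht, hsC0]
  have ht0 : t 0 = 1 := by
    have hsC0 : sC 0 = 0 := by simp [hsC, hA0]
    simp [ht, hsC0]
  -- layer bounds
  have hstep : ∀ k, k < n →
      0 ≤ t k - t (k+1) ∧ t k - t (k+1) ≤ ∑ ω ∈ A k \ A (k+1), pbar ω := by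
    intro k hk
    have hsubk : A (k+1) ⊆ A k := subset_of_ssubset (hchain k hk)
    have hcs : (A k)ᶜ ⊆ (A (k+1))ᶜ := Finset.compl_subset_compl.mpr hsubk
    have hmono : sC k ≤ sC (k+1) := by
      simp only [hsC]
      exact Finset.sum_le_sum_of_subset_of_nonneg hcs (fun ω _ _ => hpb0 ω)
    have hdiff : sC (k+1) - sC k = ∑ ω ∈ A k \ A (k+1), pbar ω := by
      have hsd := Finset.sum_sdiff (f := pbar) hcs
      have hset : (A (k+1))ᶜ \ (A k)ᶜ = A k \ A (k+1) := by
        ext ω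
        simp only [Finset.mem_sdiff, Finset.mem_compl]
        tauto
      rw [hset] at hsd
      simp only [hsC]
      linarith
    constructor
    · have h1 : max 0 (1 - sC (k+1)) ≤ max 0 (1 - sC k) :=
        max_le_max le_rfl (by linarith)
      simp only [ht]; linarith
    · have h1 : max 0 (1 - sC k) ≤ ((1 - sC k) - (1 - sC (k+1))) + max 0 (1 - sC (k+1)) := by
        refine max_le (add_nonneg (by linarith) (le_max_left _ _)) ?_
        have := le_max_right 0 (1 - sC (k+1))
        linarith
      simp only [ht]; linarith
  -- construction of the extreme mass function
  have hcons : ∀ m, m ≤ n → ∃ p : Ω → ℝ, (∀ ω, 0 ≤ p ω ∧ p ω ≤ pbar ω) ∧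
      (∀ ω ∉ A (n - m), p ω = 0) ∧ ∀ j, n - m ≤ j → j ≤ n → ∑ ω ∈ A j, p ω = t j := by
    intro m
    induction m with
    | zero =>
      intro _
      have h0 : 0 ≤ t n := le_max_left _ _
      have h1 : t n ≤ ∑ ω ∈ A n, pbar ω := by
        have hc := Finset.sum_add_sum_compl (A n) pbar
        refine max_le (Finset.sum_nonneg fun ω _ => hpb0 ω) ?_
        simp only [hsC]
        linarith
      obtain ⟨q, hqb, hq0, hqs⟩ := waterfill pbar hpb0 (A n) (t n) h0 h1
      refine ⟨q, hqb, ?_, ?_⟩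
      · simpa using hq0
      · intro j hj1 hj2
        have hjn : j = n := le_antisymm hj2 (by simpa using hj1)
        subst hjn; exact hqs
    | succ m ih =>
      intro hm
      obtain ⟨p, hpb', hp0, hps⟩ := ih (by omega)
      have hk1 : n - m = (n - (m+1)) + 1 := by omega
      set k := n - (m+1) with hkdef
      have hkn : k < n := by omega
      rw [hk1] at hp0 hps
      obtain ⟨hst1, hst2⟩ := hstep k hkn
      obtain ⟨q, hqb, hq0, hqs⟩ :=
        waterfill pbar hpb0 (A k \ A (k+1)) (t k - t (k+1)) hst1 hst2
      have hsubk : A (k+1) ⊆ A k := subset_of_ssubset (hchain k hkn)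
      refine ⟨fun ω => p ω + q ω, ?_, ?_, ?_⟩
      · intro ω
        by_cases h : ω ∈ A (k+1)
        · have hz : q ω = 0 := hq0 ω (by simp [Finset.mem_sdiff, h])
          simp only [hz, add_zero]; exact hpb' ω
        · have hz : p ω = 0 := hp0 ω h
          simp only [hz, zero_add]; exact hqb ω
      · intro ω hω
        have h1 : ω ∉ A (k+1) := fun h => hω (hsubk h)
        simp only [hp0 ω h1, hq0 ω (by simp [Finset.mem_sdiff, hω]), add_zero]
      · intro j hj1 hj2
        rcases eq_or_lt_of_le hj1 with rfl | hlt
        · simp only [Finset.sum_add_distrib]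
          have e1 : ∑ ω ∈ A k, p ω = t (k+1) := by
            rw [← Finset.sum_subset hsubk (fun x _ hx => hp0 x hx)]
            exact hps (k+1) le_rfl (by omega)
          have e2 : ∑ ω ∈ A k, q ω = t k - t (k+1) := by
            rw [← Finset.sum_subset Finset.sdiff_subset (fun x hx hnx => hq0 x hnx)]
            exact hqs
          rw [e1, e2]; ring
        · simp only [Finset.sum_add_distrib]
          have hj1' : k + 1 ≤ j := hlt
          have e1 : ∑ ω ∈ A j, p ω = t j := hps j hj1' hj2
          have e2 : ∑ ω ∈ A j, q ω = 0 := by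
            refine Finset.sum_eq_zero fun ω hω => hq0 ω ?_
            have hmem : ω ∈ A (k+1) := hsub (k+1) j hj1' hj2 hω
            simp [Finset.mem_sdiff, hmem]
          rw [e1, e2, add_zero]
  obtain ⟨pstar, hpsb, -, hpsum⟩ := hcons n le_rfl
  have hpsum' : ∀ i, i ≤ n → ∑ ω ∈ A i, pstar ω = t i := fun i hi =>
    hpsum i (by omega) hi
  have hp1 : ∑ ω : Ω, pstar ω = 1 := by
    have h := hpsum' 0 (Nat.zero_le n)
    rw [hA0, ht0] at h
    exact h
  -- value on indicators
  have hind : ∀ i, i ≤ n →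
      lowerExt pbar (fun ω => if ω ∈ A i then (1:ℝ) else 0) = t i := by
    intro i hi
    apply le_antisymm
    · have hle := lowerExt_le_sum pbar pstar (fun ω => if ω ∈ A i then (1:ℝ) else 0)
        (fun ω => (hpsb ω).1) (fun ω => (hpsb ω).2) hp1
      have e : ∑ ω : Ω, pstar ω * (if ω ∈ A i then (1:ℝ) else 0) = ∑ ω ∈ A i, pstar ω := by
        have e' : ∀ ω : Ω, pstar ω * (if ω ∈ A i then (1:ℝ) else 0)
            = if ω ∈ A i then pstar ω else 0 := fun ω => by
          by_cases h : ω ∈ A i <;> simp [h]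
        rw [Finset.sum_congr rfl (fun ω _ => e' ω), Finset.sum_ite_mem, Finset.univ_inter]
      rw [e, hpsum' i hi] at hle
      exact hle
    · exact le_lowerExt pbar pstar _ (fun ω => (hpsb ω).1) (fun ω => (hpsb ω).2) hp1
        (t i) (μ i) (hμ0 i) (fun ω' => key i ω')
  have hrhs : ∑ i ∈ Finset.range (n+1),
      lam i * lowerExt pbar (fun ω => if ω ∈ A i then (1:ℝ) else 0)
      = ∑ i ∈ Finset.range (n+1), lam i * t i :=
    Finset.sum_congr rfl fun i hi => by
      rw [hind i (Nat.lt_succ_iff.mp (Finset.mem_range.mp hi))]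
  rw [hrhs]
  apply le_antisymm
  · have hle := lowerExt_le_sum pbar pstar f
      (fun ω => (hpsb ω).1) (fun ω => (hpsb ω).2) hp1
    have e : ∑ ω : Ω, pstar ω * f ω = ∑ i ∈ Finset.range (n+1), lam i * t i := by
      calc ∑ ω : Ω, pstar ω * f ω
          = ∑ ω : Ω, ∑ i ∈ Finset.range (n+1),
              pstar ω * (lam i * (if ω ∈ A i then (1:ℝ) else 0)) := by
            refine Finset.sum_congr rfl fun ω _ => ?_
            rw [hf ω, Finset.mul_sum]
        _ = ∑ i ∈ Finset.range (n+1), ∑ ω : Ω,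
              pstar ω * (lam i * (if ω ∈ A i then (1:ℝ) else 0)) := Finset.sum_comm
        _ = ∑ i ∈ Finset.range (n+1), lam i * t i := by
            refine Finset.sum_congr rfl fun i hi => ?_
            have hi' : i ≤ n := Nat.lt_succ_iff.mp (Finset.mem_range.mp hi)
            have e' : ∀ ω : Ω, pstar ω * (lam i * (if ω ∈ A i then (1:ℝ) else 0))
                = lam i * (if ω ∈ A i then pstar ω else 0) := fun ω => by
              by_cases h : ω ∈ A i <;> simp [h] <;> ring
            rw [Finset.sum_congr rfl fun ω _ => e' ω, ← Finset.mul_sum,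
              Finset.sum_ite_mem, Finset.univ_inter, hpsum' i hi']
    rw [← e]
    exact hle
  · set L : Ω → ℝ := fun ω => ∑ i ∈ Finset.range (n+1), lam i * μ i ω with hL
    have hL0 : ∀ ω, 0 ≤ L ω := by
      intro ω
      refine Finset.sum_nonneg fun i hi => ?_
      rcases Nat.eq_zero_or_pos i with rfl | hipos
      · have hz : μ 0 ω = 0 := by simp [hμ, hA0]
        simp [hz]
      · exact mul_nonneg
          (hlam i hipos (Nat.lt_succ_iff.mp (Finset.mem_range.mp hi))).le (hμ0 i ω)
    have hLsum : ∑ ω : Ω, L ω * pbar ω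
        = ∑ i ∈ Finset.range (n+1), lam i * ∑ ω : Ω, μ i ω * pbar ω := by
      simp only [hL, Finset.sum_mul, Finset.mul_sum]
      rw [Finset.sum_comm]
      exact Finset.sum_congr rfl fun i _ => Finset.sum_congr rfl fun ω _ => by ring
    refine le_lowerExt pbar pstar f (fun ω => (hpsb ω).1) (fun ω => (hpsb ω).2) hp1
      (∑ i ∈ Finset.range (n+1), lam i * t i) L hL0 ?_
    intro ω'
    rw [hf ω', hLsum]
    have hterm : ∀ i ∈ Finset.range (n+1),
        lam i * t i + lam i * (∑ ω : Ω, μ i ω * pbar ω) - lam i * μ i ω'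
          ≤ lam i * (if ω' ∈ A i then (1:ℝ) else 0) := by
      intro i hi
      rcases Nat.eq_zero_or_pos i with rfl | hipos
      · calc lam 0 * t 0 + lam 0 * (∑ ω : Ω, μ 0 ω * pbar ω) - lam 0 * μ 0 ω'
            = lam 0 * (t 0 + (∑ ω : Ω, μ 0 ω * pbar ω) - μ 0 ω') := by ring
          _ ≤ lam 0 * (if ω' ∈ A 0 then (1:ℝ) else 0) := le_of_eq (by rw [key0 ω'])
      · have h := key i ω'
        have hl := (hlam i hipos (Nat.lt_succ_iff.mp (Finset.mem_range.mp hi))).le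
        calc lam i * t i + lam i * (∑ ω : Ω, μ i ω * pbar ω) - lam i * μ i ω'
            = lam i * (t i + (∑ ω : Ω, μ i ω * pbar ω) - μ i ω') := by ring
          _ ≤ lam i * (if ω' ∈ A i then (1:ℝ) else 0) :=
            mul_le_mul_of_nonneg_left h hl
    have hsum := Finset.sum_le_sum hterm
    simp only [Finset.sum_sub_distrib, Finset.sum_add_distrib] at hsum
    have hLω : L ω' = ∑ i ∈ Finset.range (n+1), lam i * μ i ω' := rfl
    linarith
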